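/- In the free group 𝔽 on a set 𝒢 of generators, let g ∈ 𝔽 be such that g cannot be written as g = μν⁻¹ with μ, ν in the positive cone 𝔽₊ and |g| = |μ| + |ν|. If {B_g} is a semi-saturated and orthogonal grading of a C*-algebra B over 𝔽, then B_g = {0}. -/

import Mathlib

open scoped Pointwise

namespace Stmt6Aux

variable {α : Type*} [DecidableEq α]

/-- The non-cancellation relation between adjacent letters. -/
def Rred (a b : α × Bool) : Prop := ¬(a.1 = b.1 ∧ a.2 = !b.2)

instance : DecidableRel (Rred (α := α)) := fun a b => by
  unfold Rred; infer_instance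

lemma reduce_eq_self_of_chain : ∀ {L : List (α × Bool)},
    L.Chain' Rred → FreeGroup.reduce L = L := by
  intro L
  induction L with
  | nil => intro _; rfl
  | cons a L ih =>
    intro h
    rw [FreeGroup.reduce.cons, ih h.tail]
    cases L with
    | nil => rfl
    | cons b L' =>
      have hab : Rred a b := List.isChain_cons_cons.mp h |>.1
      simp only [Rred, not_and] at hab
      by_cases h1 : a.1 = b.1
      · simp [h1, hab h1]
      · simp [h1]

lemma chain_of_reduce_eq_self {L : List (α × Bool)}
    (h : FreeGroup.reduce L = L) : L.Chain' Rred := by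
  by_contra hc
  -- extract an adjacent cancelling pair
  have key : ∀ (M : List (α × Bool)), ¬ M.Chain' Rred →
      ∃ (L₂ : List (α × Bool)) (x : α) (b : Bool) (L₃ : List (α × Bool)),
        M = L₂ ++ (x, b) :: (x, !b) :: L₃ := by
    intro M
    induction M with
    | nil => intro h'; exact absurd List.isChain_nil h'
    | cons c M ih =>
      intro h'
      rw [List.Chain', List.isChain_cons] at h'
      by_cases hM : M.Chain' Rred
      · have hhd : ¬ ∀ y ∈ M.head?, Rred c y := fun hp => h' ⟨hp, hM⟩
        push_neg at hhd
        obtain ⟨d, hd, hcd⟩ := hhd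
        cases M with
        | nil => simp at hd
        | cons e M' =>
          have hde : e = d := by simpa using hd
          subst hde
          simp only [Rred, not_not] at hcd
          refine ⟨[], c.1, c.2, M', ?_⟩
          have h2 : e.2 = !c.2 := by rw [hcd.2]; simp
          have : e = (c.1, !c.2) := Prod.ext hcd.1.symm h2
          simp [this]
      · obtain ⟨L₂, x, b, L₃, hM'⟩ := ih hM
        exact ⟨c :: L₂, x, b, L₃, by simp [hM']⟩
  obtain ⟨L₂, x, b, L₃, hM⟩ := key L hc
  rw [hM] at h
  exact FreeGroup.reduce.not h

lemma mk_mem_pos {L : List (α × Bool)} (h : ∀ a ∈ L, a.2 = true) :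
    FreeGroup.mk L ∈
      Submonoid.closure (Set.range (FreeGroup.of : α → FreeGroup α)) := by
  induction L with
  | nil =>
    have : FreeGroup.mk ([] : List (α × Bool)) = 1 := rfl
    rw [this]; exact one_mem _
  | cons a L ih =>
    have ha : a = (a.1, true) := Prod.ext rfl (h a (by simp))
    have : FreeGroup.mk (a :: L) = FreeGroup.of a.1 * FreeGroup.mk L := by
      rw [ha]
      show FreeGroup.mk ([(a.1, true)] ++ L) = _
      rw [← FreeGroup.mul_mk]; rfl
    rw [this]
    exact mul_mem (Submonoid.subset_closure ⟨a.1, rfl⟩)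
      (ih fun b hb => h b (by simp [hb]))

lemma chain_of_all_true {L : List (α × Bool)} (h : ∀ a ∈ L, a.2 = true) :
    L.Chain' Rred := by
  rw [List.Chain', List.isChain_iff_getElem]
  intro i hi
  have h1 := h (L.get ⟨i, by omega⟩) (List.mem_iff_get.mpr ⟨_, rfl⟩)
  have h2 := h (L.get ⟨i + 1, by omega⟩) (List.mem_iff_get.mpr ⟨_, rfl⟩)
  simp only [List.get_eq_getElem] at h1 h2
  simp only [Rred, h1, h2]
  simp

/-- If the booleans never go from `false` to `true`, the word splits as
trues followed by falses. -/
lemma split_of_no_descent : ∀ {L : List (α × Bool)},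
    L.Chain' (fun a b => ¬(a.2 = false ∧ b.2 = true)) →
    ∃ A B : List (α × Bool), L = A ++ B ∧ (∀ a ∈ A, a.2 = true) ∧
      (∀ b ∈ B, b.2 = false) := by
  intro L
  induction L with
  | nil => intro _; exact ⟨[], [], by simp, by simp, by simp⟩
  | cons c L ih =>
    intro h
    obtain ⟨A, B, hL, hA, hB⟩ := ih h.tail
    cases hc : c.2 with
    | true =>
      exact ⟨c :: A, B, by simp [hL], by
        intro a ha
        rcases List.mem_cons.mp ha with rfl | ha
        · exact hc
        · exact hA a ha, hB⟩
    | false =>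
      refine ⟨[], c :: (A ++ B), by simp [hL], by simp, ?_⟩
      intro b hb
      rcases List.mem_cons.mp hb with rfl | hb
      · exact hc
      have hAnil : A = [] := by
        cases A with
        | nil => rfl
        | cons a A' =>
          exfalso
          have hrel := (List.isChain_cons.mp (hL ▸ h)).1 a (by simp)
          exact hrel ⟨hc, hA a (by simp)⟩
      rw [hAnil] at hL hb
      exact hB b (by simpa using hb)

end Stmt6Aux

/-- Let `𝔽` be the free group on a set `𝒢` of generators, with word
length `|g| = (toWord g).length` and positive cone `𝔽₊` the submonoid generated by the
generators.  If `{B_g}` is a semi-saturated and orthogonal grading of a C*-algebra `B`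
over `𝔽`, and `g ∈ 𝔽` cannot be written as `g = μ ν⁻¹` with `μ, ν ∈ 𝔽₊` and
`|g| = |μ| + |ν|`, then `B_g = {0}`. -/
theorem stmt_6 {𝒢 : Type*} [DecidableEq 𝒢] {B : Type*} [NormedRing B] [StarRing B]
    [CStarRing B] [NormedAlgebra ℂ B] [CompleteSpace B] [StarModule ℂ B]
    (Bg : FreeGroup 𝒢 → Submodule ℂ B)
    (hclosed : ∀ g, IsClosed (Bg g : Set B))
    (hmul : ∀ g h, ∀ a ∈ Bg g, ∀ b ∈ Bg h, a * b ∈ Bg (g * h))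
    (hstar : ∀ g, ∀ a ∈ Bg g, star a ∈ Bg g⁻¹)
    (hindep : iSupIndep Bg)
    (hdense : (⨆ g, Bg g).topologicalClosure = ⊤)
    -- semi-saturated: `B_{gh}` is the closed span of `B_g B_h` when `|gh| = |g| + |h|`
    (hss : ∀ g h : FreeGroup 𝒢,
      (g * h).toWord.length = g.toWord.length + h.toWord.length →
      Bg (g * h) = (Submodule.span ℂ ((Bg g : Set B) * (Bg h : Set B))).topologicalClosure)
    -- orthogonal: `B_x* B_y = 0` for distinct generators
    (horth : ∀ x y : 𝒢, x ≠ y →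
      ∀ a ∈ Bg (FreeGroup.of x), ∀ b ∈ Bg (FreeGroup.of y), star a * b = 0)
    (g : FreeGroup 𝒢)
    (hg : ¬ ∃ μ ν : FreeGroup 𝒢,
      μ ∈ Submonoid.closure (Set.range (FreeGroup.of : 𝒢 → FreeGroup 𝒢)) ∧
      ν ∈ Submonoid.closure (Set.range (FreeGroup.of : 𝒢 → FreeGroup 𝒢)) ∧
      g = μ * ν⁻¹ ∧ g.toWord.length = μ.toWord.length + ν.toWord.length) :
    Bg g = ⊥ := by
  classical
  set w := g.toWord with hw
  have hwred : FreeGroup.reduce w = w := g.reduce_toWord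
  have hwchain : w.Chain' Stmt6Aux.Rred := Stmt6Aux.chain_of_reduce_eq_self hwred
  by_cases hdesc : w.Chain' (fun a b => ¬(a.2 = false ∧ b.2 = true))
  · -- no descent: contradiction with hg
    exfalso
    apply hg
    obtain ⟨A, Bl, hL, hA, hB⟩ := Stmt6Aux.split_of_no_descent hdesc
    refine ⟨FreeGroup.mk A, (FreeGroup.mk Bl)⁻¹, Stmt6Aux.mk_mem_pos hA, ?_, ?_, ?_⟩
    · rw [FreeGroup.inv_mk]
      apply Stmt6Aux.mk_mem_pos
      intro a ha
      simp only [FreeGroup.invRev, List.mem_reverse, List.mem_map] at ha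
      obtain ⟨b, hb, rfl⟩ := ha
      simp [hB b hb]
    · rw [inv_inv, FreeGroup.mul_mk, ← hL, hw, FreeGroup.mk_toWord]
    · have hAred : (FreeGroup.mk A).toWord = A := by
        rw [FreeGroup.toWord_mk]
        exact Stmt6Aux.reduce_eq_self_of_chain (Stmt6Aux.chain_of_all_true hA)
      have hBred : ((FreeGroup.mk Bl)⁻¹).toWord = FreeGroup.invRev Bl := by
        rw [FreeGroup.inv_mk, FreeGroup.toWord_mk]
        apply Stmt6Aux.reduce_eq_self_of_chain
        apply Stmt6Aux.chain_of_all_true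
        intro a ha
        simp only [FreeGroup.invRev, List.mem_reverse, List.mem_map] at ha
        obtain ⟨b, hb, rfl⟩ := ha
        simp [hB b hb]
      rw [hAred, hBred, FreeGroup.invRev_length, hL, List.length_append]
  · -- there is a descent at some index i
    rw [List.Chain', List.isChain_iff_getElem] at hdesc
    push_neg at hdesc
    obtain ⟨i, hi, hfalse, htrue⟩ := hdesc
    have hi1 : i + 1 < w.length := by omega
    have hi0 : i < w.length := by omega
    set x := (w.get ⟨i, hi0⟩).1 with hx
    set y := (w.get ⟨i + 1, hi1⟩).1 with hy
    have hwi : w.get ⟨i, hi0⟩ = (x, false) := Prod.ext rfl hfalse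
    have hwi1 : w.get ⟨i + 1, hi1⟩ = (y, true) := Prod.ext rfl htrue
    have hxy : x ≠ y := by
      have := List.isChain_iff_getElem.mp hwchain i hi
      rw [show w[i] = (x, false) from hwi, show w[i + 1] = (y, true) from hwi1] at this
      simp only [Stmt6Aux.Rred, not_and] at this
      intro h
      exact this h rfl
    -- the pieces
    set P := w.take i with hP
    set Q := w.drop (i + 2) with hQ
    have hwi' : w[i] = (x, false) := by simpa using hwi
    have hwi1' : w[i + 1] = (y, true) := by simpa using hwi1
    have htake : w.take (i + 1) = P ++ [(x, false)] := by
      rw [List.take_succ, List.getElem?_eq_getElem hi0, hwi', hP]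
      rfl
    have hdrop : w.drop (i + 1) = (y, true) :: Q := by
      rw [List.drop_eq_getElem_cons hi1, hwi1', hQ]
    set a := FreeGroup.mk (w.take (i + 1)) with ha
    set b := FreeGroup.mk (w.drop (i + 1)) with hb
    set a' := FreeGroup.mk P with ha'
    set b' := FreeGroup.mk Q with hb'
    have hofx : FreeGroup.mk [((x : 𝒢), false)] = (FreeGroup.of x)⁻¹ := by
      rw [show (FreeGroup.of x : FreeGroup 𝒢) = FreeGroup.mk [(x, true)] from rfl,
        FreeGroup.inv_mk]
      rfl
    have hsplit_a : a = a' * (FreeGroup.of x)⁻¹ := by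
      rw [ha, htake, ha', ← hofx, FreeGroup.mul_mk]
    have hsplit_b : b = FreeGroup.of y * b' := by
      rw [hb, hdrop, hb',
        show (FreeGroup.of y : FreeGroup 𝒢) = FreeGroup.mk [(y, true)] from rfl,
        FreeGroup.mul_mk]
      rfl
    have hgab : g = a * b := by
      rw [ha, hb, FreeGroup.mul_mk, List.take_append_drop, hw, FreeGroup.mk_toWord]
    -- lengths of the reduced pieces
    have hwa : a.toWord = w.take (i + 1) := by
      rw [ha, FreeGroup.toWord_mk]
      exact Stmt6Aux.reduce_eq_self_of_chain (hwchain.take _)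
    have hwb : b.toWord = w.drop (i + 1) := by
      rw [hb, FreeGroup.toWord_mk]
      exact Stmt6Aux.reduce_eq_self_of_chain (hwchain.drop _)
    have hwa' : a'.toWord = P := by
      rw [ha', FreeGroup.toWord_mk, hP]
      exact Stmt6Aux.reduce_eq_self_of_chain (hwchain.take _)
    have hwb' : b'.toWord = Q := by
      rw [hb', FreeGroup.toWord_mk, hQ]
      exact Stmt6Aux.reduce_eq_self_of_chain (hwchain.drop _)
    have hwofx : ((FreeGroup.of x : FreeGroup 𝒢)⁻¹).toWord = [(x, false)] := by
      rw [← hofx, FreeGroup.toWord_mk]; rfl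
    have hwofy : ((FreeGroup.of y : FreeGroup 𝒢)).toWord = [(y, true)] := by
      rw [show (FreeGroup.of y : FreeGroup 𝒢) = FreeGroup.mk [(y, true)] from rfl,
        FreeGroup.toWord_mk]; rfl
    have hlen_ab : (a * b).toWord.length = a.toWord.length + b.toWord.length := by
      rw [← hgab, ← hw, hwa, hwb, List.length_take, List.length_drop]
      omega
    have hlen_a : (a' * (FreeGroup.of x)⁻¹).toWord.length
        = a'.toWord.length + ((FreeGroup.of x : FreeGroup 𝒢)⁻¹).toWord.length := by
      rw [← hsplit_a, hwa, hwa', hwofx, hP, List.length_take, List.length_take]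
      simp only [List.length_cons, List.length_nil]
      omega
    have hlen_b : (FreeGroup.of y * b').toWord.length
        = (FreeGroup.of y : FreeGroup 𝒢).toWord.length + b'.toWord.length := by
      rw [← hsplit_b, hwb, hwb', hwofy, hQ, List.length_drop, List.length_drop]
      simp only [List.length_cons, List.length_nil]
      omega
    -- analytic part
    have step1 : ∀ u ∈ Bg (FreeGroup.of x)⁻¹, ∀ v ∈ Bg (FreeGroup.of y), u * v = 0 := by
      intro u hu v hv
      have h1 : star u ∈ Bg (FreeGroup.of x) := by
        have := hstar _ u hu
        rwa [inv_inv] at this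
      have := horth x y hxy (star u) h1 v hv
      rwa [star_star] at this
    have step2 : ∀ u ∈ Bg (FreeGroup.of x)⁻¹, ∀ v ∈ Bg b, u * v = 0 := by
      intro u hu v hv
      have hker : Bg b ≤ LinearMap.ker (ContinuousLinearMap.mul ℂ B u : B →ₗ[ℂ] B) := by
        rw [hsplit_b, hss _ _ hlen_b]
        apply Submodule.topologicalClosure_minimal
        · rw [Submodule.span_le]
          rintro _ ⟨r, hr, s, hs, rfl⟩
          simp only [SetLike.mem_coe, LinearMap.mem_ker, ContinuousLinearMap.coe_coe,
            ContinuousLinearMap.mul_apply']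
          rw [← mul_assoc, step1 u hu r hr, zero_mul]
        · exact ContinuousLinearMap.isClosed_ker (ContinuousLinearMap.mul ℂ B u)
      have := hker hv
      simpa using this
    have step3 : ∀ u ∈ Bg a, ∀ v ∈ Bg b, u * v = 0 := by
      intro u hu v hv
      have hker : Bg a ≤ LinearMap.ker ((ContinuousLinearMap.mul ℂ B).flip v : B →ₗ[ℂ] B) := by
        rw [hsplit_a, hss _ _ hlen_a]
        apply Submodule.topologicalClosure_minimal
        · rw [Submodule.span_le]
          rintro _ ⟨p, hp, q, hq, rfl⟩
          simp only [SetLike.mem_coe, LinearMap.mem_ker, ContinuousLinearMap.coe_coe,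
            ContinuousLinearMap.flip_apply, ContinuousLinearMap.mul_apply']
          rw [mul_assoc, step2 q hq v hv, mul_zero]
        · exact ContinuousLinearMap.isClosed_ker ((ContinuousLinearMap.mul ℂ B).flip v)
      have := hker hu
      simpa using this
    rw [hgab, hss _ _ hlen_ab]
    apply le_bot_iff.mp
    apply Submodule.topologicalClosure_minimal
    · rw [Submodule.span_le]
      rintro _ ⟨u, hu, v, hv, rfl⟩
      simp [step3 u hu v hv]
    · rw [Submodule.bot_coe]; exact isClosed_singleton
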